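/- arXiv:1608.02197 — 4 statements merged into one kernel-verified Lean document; each statement's English description precedes it below -/
import Mathlib

section
/- Let k ≥ 1 and n_1,…,n_k be integers with each n_i ≥ 2. The radius of the hierarchical graph H_{n_1,…,n_k} (the minimum over all vertices of their eccentricity) equals k. -/
/-- The value of the `j`-th coordinate (0-indexed) of the string `x`,
extended by `0` for positions `≥ k`. -/
def extVal (n : ℕ → ℕ) (k : ℕ) (x : ∀ i : Fin k, Fin (n i)) (j : ℕ) : ℕ :=
  if h : j < k then (x ⟨j, h⟩).val else 0

/-- The alternating number of the string `x`: the number of (0-indexed) positions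
`j ∈ {0,…,k-1}` such that exactly one of `x_j`, `x_{j+1}` is zero (with `x_k := 0`). -/
def altNum (n : ℕ → ℕ) (k : ℕ) (x : ∀ i : Fin k, Fin (n i)) : ℕ :=
  ((Finset.range k).filter (fun j =>
    (extVal n k x j = 0 ∧ extVal n k x (j + 1) ≠ 0) ∨
    (extVal n k x j ≠ 0 ∧ extVal n k x (j + 1) = 0))).card

/-- Adjacency in the hierarchical graph `H_{n_1,…,n_k}` (coordinates 0-indexed):
rule (A1): the two strings differ exactly in the first coordinate;
rule (A2): for some `j`, one string has its first `j+1` coordinates all zero, the other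
has its first `j+1` coordinates all nonzero, and they agree on the remaining coordinates;
rule (A3): for some `m ≥ 1`, both strings have their first `m` coordinates zero, their
`m`-th coordinates are distinct and nonzero, and they agree beyond position `m`. -/
def HierAdj (n : ℕ → ℕ) (k : ℕ) (x y : ∀ i : Fin k, Fin (n i)) : Prop :=
  x ≠ y ∧
    ((∀ i : Fin k, 0 < i.val → x i = y i) ∨
     (∃ j : Fin k,
       (((∀ i : Fin k, i.val ≤ j.val → (x i).val = 0) ∧
         (∀ i : Fin k, i.val ≤ j.val → (y i).val ≠ 0)) ∨
        ((∀ i : Fin k, i.val ≤ j.val → (y i).val = 0) ∧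
         (∀ i : Fin k, i.val ≤ j.val → (x i).val ≠ 0))) ∧
       (∀ i : Fin k, j.val < i.val → x i = y i)) ∨
     (∃ m : Fin k, 0 < m.val ∧
       (∀ i : Fin k, i.val < m.val → (x i).val = 0 ∧ (y i).val = 0) ∧
       (x m).val ≠ 0 ∧ (y m).val ≠ 0 ∧ x m ≠ y m ∧
       (∀ i : Fin k, m.val < i.val → x i = y i)))

/-- The hierarchical graph `H_{n_1,…,n_k}` as a simple graph on the strings
`x = x_1…x_k` with `x_i ∈ Z_{n_i}`. -/
def hierGraph (n : ℕ → ℕ) (k : ℕ) : SimpleGraph (∀ i : Fin k, Fin (n i)) where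
  Adj := HierAdj n k
  symm := by
    constructor
    rintro x y ⟨hne, h⟩
    refine ⟨hne.symm, ?_⟩
    rcases h with h | ⟨j, hj, hag⟩ | ⟨m, hm, hpre, hx, hy, hxy, hs⟩
    · exact Or.inl fun i hi => (h i hi).symm
    · exact Or.inr (Or.inl ⟨j, hj.symm, fun i hi => (hag i hi).symm⟩)
    · exact Or.inr (Or.inr ⟨m, hm, fun i hi => ⟨(hpre i hi).2, (hpre i hi).1⟩,
        hy, hx, hxy.symm, fun i hi => (hs i hi).symm⟩)
  loopless := ⟨fun x h => h.1 rfl⟩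


namespace HierRadius

variable {n : ℕ → ℕ} {k : ℕ}

lemma extVal_lt (x : ∀ i : Fin k, Fin (n i)) {j : ℕ} (h : j < k) :
    extVal n k x j = (x ⟨j, h⟩).val := dif_pos h

lemma extVal_ge (x : ∀ i : Fin k, Fin (n i)) {j : ℕ} (h : k ≤ j) :
    extVal n k x j = 0 := dif_neg (not_lt.2 h)

/-- The filter defining `altNum`. -/
def altSet (n : ℕ → ℕ) (k : ℕ) (x : ∀ i : Fin k, Fin (n i)) : Finset ℕ :=
  (Finset.range k).filter (fun j =>
    (extVal n k x j = 0 ∧ extVal n k x (j + 1) ≠ 0) ∨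
    (extVal n k x j ≠ 0 ∧ extVal n k x (j + 1) = 0))

lemma altNum_eq (x : ∀ i : Fin k, Fin (n i)) : altNum n k x = (altSet n k x).card := rfl

lemma mem_altSet {x : ∀ i : Fin k, Fin (n i)} {j : ℕ} :
    j ∈ altSet n k x ↔ j < k ∧
      ((extVal n k x j = 0 ∧ extVal n k x (j + 1) ≠ 0) ∨
       (extVal n k x j ≠ 0 ∧ extVal n k x (j + 1) = 0)) := by
  simp [altSet, Finset.mem_filter]

lemma altNum_le (x : ∀ i : Fin k, Fin (n i)) : altNum n k x ≤ k := by
  rw [altNum_eq]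
  exact le_trans (Finset.card_filter_le _ _) (by simp)

lemma card_le_card_insert {s t : Finset ℕ} {a : ℕ} (h : s ⊆ insert a t) :
    s.card ≤ t.card + 1 :=
  le_trans (Finset.card_le_card h) (Finset.card_insert_le _ _)

lemma altNum_eq_zero {x : ∀ i : Fin k, Fin (n i)} (h : ∀ i, (x i).val = 0) :
    altNum n k x = 0 := by
  have he : ∀ m, extVal n k x m = 0 := by
    intro m
    by_cases hm : m < k
    · rw [extVal_lt x hm]; exact h _
    · exact extVal_ge x (not_lt.1 hm)
  rw [altNum_eq, altSet, Finset.filter_false_of_mem, Finset.card_empty]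
  intro j _
  simp [he]

lemma altNum_allnonzero {x : ∀ i : Fin k, Fin (n i)} (hk : 0 < k)
    (h : ∀ i, (x i).val ≠ 0) : altNum n k x = 1 := by
  have he : ∀ m, extVal n k x m = 0 ↔ k ≤ m := by
    intro m
    by_cases hm : m < k
    · rw [extVal_lt x hm]; simp [h ⟨m, hm⟩, hm, not_le.2 hm]
    · simp [extVal_ge x (not_lt.1 hm), not_lt.1 hm]
  have : altSet n k x = {k - 1} := by
    ext j
    rw [mem_altSet, Finset.mem_singleton]
    constructor
    · rintro ⟨hj, (⟨h1, _⟩ | ⟨_, h2⟩)⟩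
      · exact absurd ((he j).1 h1) (by omega)
      · have := (he (j + 1)).1 h2; omega
    · rintro rfl
      refine ⟨by omega, Or.inr ⟨?_, ?_⟩⟩
      · intro hc; have := (he _).1 hc; omega
      · exact (he _).2 (by omega)
  rw [altNum_eq, this, Finset.card_singleton]

/-- `altNum` changes by at most one along an edge. -/
lemma altNum_adj_le {x y : ∀ i : Fin k, Fin (n i)} (h : HierAdj n k x y) :
    altNum n k x ≤ altNum n k y + 1 := by
  obtain ⟨hne, h1 | ⟨j, hj, hag⟩ | ⟨m, hm, hpre, hxm, hym, hxy, hs⟩⟩ := h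
  · -- A1 : agree above 0
    have key : ∀ m, 1 ≤ m → extVal n k x m = extVal n k y m := by
      intro m hm
      by_cases hmk : m < k
      · rw [extVal_lt x hmk, extVal_lt y hmk, h1 ⟨m, hmk⟩ hm]
      · rw [extVal_ge x (not_lt.1 hmk), extVal_ge y (not_lt.1 hmk)]
    rw [altNum_eq, altNum_eq]
    refine card_le_card_insert (t := altSet n k y) (a := 0) ?_
    intro j' hj'
    rw [mem_altSet] at hj'
    rcases Nat.eq_zero_or_pos j' with rfl | hpos
    · exact Finset.mem_insert_self _ _
    · refine Finset.mem_insert_of_mem ?_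
      rw [mem_altSet, ← key j' hpos, ← key (j' + 1) (by omega)]
      exact hj'
  · -- A2
    have key : ∀ m, j.val < m → extVal n k x m = extVal n k y m := by
      intro m hm
      by_cases hmk : m < k
      · rw [extVal_lt x hmk, extVal_lt y hmk, hag ⟨m, hmk⟩ hm]
      · rw [extVal_ge x (not_lt.1 hmk), extVal_ge y (not_lt.1 hmk)]
    rw [altNum_eq, altNum_eq]
    refine card_le_card_insert (t := altSet n k y) (a := j.val) ?_
    intro j' hj'
    rw [mem_altSet] at hj'
    rcases eq_or_ne j' j.val with rfl | hne'
    · exact Finset.mem_insert_self _ _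
    refine Finset.mem_insert_of_mem ?_
    rcases lt_or_gt_of_ne hne' with hlt | hgt
    · -- impossible: both positions ≤ j have the same zero-ness for x
      exfalso
      have e1 : j' < k := hj'.1
      have e2 : j' + 1 < k := lt_of_le_of_lt (by omega) j.isLt
      rcases hj with ⟨hx0, _⟩ | ⟨_, hxnz⟩
      · have a1 := hx0 ⟨j', e1⟩ (by simpa using le_of_lt hlt)
        have a2 := hx0 ⟨j' + 1, e2⟩ (by simpa using hlt)
        rw [extVal_lt x e1, extVal_lt x e2] at hj'
        rcases hj'.2 with ⟨_, hc⟩ | ⟨hc, _⟩ <;> exact hc (by assumption)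
      · have a1 := hxnz ⟨j', e1⟩ (by simpa using le_of_lt hlt)
        have a2 := hxnz ⟨j' + 1, e2⟩ (by simpa using hlt)
        rw [extVal_lt x e1, extVal_lt x e2] at hj'
        rcases hj'.2 with ⟨hc, _⟩ | ⟨_, hc⟩ <;> [exact a1 hc; exact a2 hc]
    · rw [mem_altSet, ← key j' hgt, ← key (j' + 1) (by omega)]
      exact hj'
  · -- A3 : patterns identical
    have key : ∀ m', (extVal n k x m' = 0 ↔ extVal n k y m' = 0) := by
      intro m'
      by_cases hmk : m' < k
      · rw [extVal_lt x hmk, extVal_lt y hmk]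
        rcases lt_trichotomy m' m.val with hlt | heq | hgt
        · obtain ⟨e1, e2⟩ := hpre ⟨m', hmk⟩ hlt
          simp [e1, e2]
        · have : (⟨m', hmk⟩ : Fin k) = m := Fin.ext heq
          rw [this]
          simp [hxm, hym]
        · rw [hs ⟨m', hmk⟩ hgt]
      · rw [extVal_ge x (not_lt.1 hmk), extVal_ge y (not_lt.1 hmk)]
    have : altSet n k x = altSet n k y := by
      ext j'
      rw [mem_altSet, mem_altSet]
      simp only [ne_eq, key j', key (j' + 1)]
    rw [altNum_eq, altNum_eq, this]
    omega

end HierRadius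

namespace HierRadius

variable {n : ℕ → ℕ} {k : ℕ}

/-- Crossing edges: if the top coordinates of adjacent `x, y` have different zero-ness,
then `x` is the all-zero string and `y` is all-nonzero. -/
lemma crossing {x y : ∀ i : Fin k, Fin (n i)} (hk : k - 1 < k)
    (h : HierAdj n k x y) (hx0 : (x ⟨k - 1, hk⟩).val = 0) (hy0 : (y ⟨k - 1, hk⟩).val ≠ 0) :
    (∀ i, (x i).val = 0) ∧ (∀ i, (y i).val ≠ 0) := by
  obtain ⟨hne, h1 | ⟨j, hj, hag⟩ | ⟨m, hm, hpre, hxm, hym, hxy, hs⟩⟩ := h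
  · -- A1: forces k = 1
    have hk1 : k - 1 = 0 := by
      by_contra hc
      exact hy0 (by rw [← h1 ⟨k - 1, hk⟩ (by simp only [Fin.val_mk]; omega)]; exact hx0)
    have hone : ∀ i : Fin k, i = ⟨k - 1, hk⟩ := by
      intro i
      have := i.isLt
      exact Fin.ext (by simp only [Fin.val_mk]; omega)
    exact ⟨fun i => by rw [hone i]; exact hx0, fun i => by rw [hone i]; exact hy0⟩
  · -- A2
    rcases hj with ⟨ha, hb⟩ | ⟨ha, hb⟩
    · have hjtop : k - 1 ≤ j.val := by
        by_contra hc
        exact hy0 (by rw [← hag ⟨k - 1, hk⟩ (by simp only [Fin.val_mk]; omega)]; exact hx0)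
      exact ⟨fun i => ha i (by have := i.isLt; omega),
             fun i => hb i (by have := i.isLt; omega)⟩
    · exfalso
      by_cases hc : k - 1 ≤ j.val
      · exact hb ⟨k - 1, hk⟩ (by simp only [Fin.val_mk]; omega) hx0
      · exact hy0 (by rw [← hag ⟨k - 1, hk⟩ (by simp only [Fin.val_mk]; omega)]; exact hx0)
  · -- A3: impossible
    exfalso
    rcases lt_trichotomy (k - 1) m.val with hlt | heq | hgt
    · exact hy0 (hpre ⟨k - 1, hk⟩ (by simp only [Fin.val_mk]; omega)).2
    · have : (⟨k - 1, hk⟩ : Fin k) = m := Fin.ext heq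
      rw [this] at hx0
      exact hxm hx0
    · exact hy0 (by rw [← hs ⟨k - 1, hk⟩ (by simp only [Fin.val_mk]; omega)]; exact hx0)

/-- From a vertex with nonzero alternating number, one can step to a neighbour
with alternating number one less. -/
lemma exists_step (hk : 0 < k) (hn : ∀ i < k, 2 ≤ n i)
    (y : ∀ i : Fin k, Fin (n i)) (hy : altNum n k y ≠ 0) :
    ∃ w, HierAdj n k w y ∧ altNum n k w + 1 = altNum n k y := by
  have hpos : ∀ i : Fin k, 0 < n i := fun i => lt_of_lt_of_le two_pos (hn i i.isLt)
  classical
  by_cases h0 : (y ⟨0, hk⟩).val = 0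
  · -- zero prefix: make it nonzero up to the first nonzero coordinate
    have hex : ∃ m, extVal n k y m ≠ 0 := by
      by_contra hc
      push_neg at hc
      exact hy (altNum_eq_zero (fun i => by
        have := hc i.val; rwa [extVal_lt y i.isLt] at this))
    obtain ⟨z, hzs, hzmin⟩ : ∃ z, extVal n k y z ≠ 0 ∧ ∀ m < z, extVal n k y m = 0 :=
      ⟨Nat.find hex, Nat.find_spec hex, fun m hm => by
        by_contra hc
        exact absurd (Nat.find_le hc) (not_le.mpr hm)⟩
    have hzk : z < k := by
      by_contra hc
      exact hzs (extVal_ge y (not_lt.1 hc))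
    have hz1 : 1 ≤ z := by
      rcases Nat.eq_zero_or_pos z with h | h
      · exfalso; apply hzs; rw [h, extVal_lt y hk]; exact h0
      · exact h
    refine ⟨fun i => if h : i.val < z then ⟨1, by have := hn i.val i.isLt; omega⟩ else y i,
      ⟨?_, ?_⟩, ?_⟩
    · -- not equal
      intro hc
      have := congrFun hc ⟨0, hk⟩
      simp only [dif_pos (show (0 : ℕ) < z by omega)] at this
      rw [← this] at h0
      simp at h0
    · -- adjacency: A2 at j = z-1, with y the zero side
      refine Or.inr (Or.inl ⟨⟨z - 1, by omega⟩, Or.inr ⟨?_, ?_⟩, ?_⟩)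
      · intro i hi
        simp only [Fin.val_mk] at hi
        have := hzmin i.val (by omega)
        rwa [extVal_lt y i.isLt] at this
      · intro i hi
        simp only [Fin.val_mk] at hi
        simp only [dif_pos (show i.val < z by omega), Fin.val_mk]
        omega
      · intro i hi
        simp only [Fin.val_mk] at hi
        simp only [dif_neg (show ¬ i.val < z by omega)]
    · -- altNum drops by one
      set w : ∀ i : Fin k, Fin (n i) :=
        fun i => if h : i.val < z then ⟨1, by have := hn i.val i.isLt; omega⟩ else y i with hw
      have ew1 : ∀ m < z, extVal n k w m ≠ 0 := by
        intro m hm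
        rw [extVal_lt w (by omega)]
        simp only [hw, dif_pos (show m < z by omega), Fin.val_mk]
        omega
      have ew2 : ∀ m, z ≤ m → extVal n k w m = extVal n k y m := by
        intro m hm
        by_cases hmk : m < k
        · rw [extVal_lt w hmk, extVal_lt y hmk]
          simp only [hw, dif_neg (show ¬ m < z by omega)]
        · rw [extVal_ge w (not_lt.1 hmk), extVal_ge y (not_lt.1 hmk)]
      have hkey : altSet n k y = insert (z - 1) (altSet n k w) := by
        ext j
        rw [Finset.mem_insert, mem_altSet, mem_altSet]
        constructor
        · rintro ⟨hjk, hc⟩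
          rcases lt_trichotomy j (z - 1) with hlt | heq | hgt
          · exfalso
            have e1 := hzmin j (by omega)
            have e2 := hzmin (j + 1) (by omega)
            rcases hc with ⟨_, hc2⟩ | ⟨hc1, _⟩ <;> [exact hc2 e2; exact hc1 e1]
          · exact Or.inl heq
          · refine Or.inr ⟨hjk, ?_⟩
            rw [ew2 j (by omega), ew2 (j + 1) (by omega)]
            exact hc
        · rintro (rfl | ⟨hjk, hc⟩)
          · refine ⟨by omega, Or.inl ⟨?_, ?_⟩⟩
            · exact hzmin (z - 1) (by omega)
            · rw [show z - 1 + 1 = z by omega]; exact hzs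
          · rcases lt_trichotomy j (z - 1) with hlt | heq | hgt
            · exfalso
              have e1 := ew1 j (by omega)
              have e2 := ew1 (j + 1) (by omega)
              rcases hc with ⟨hc1, _⟩ | ⟨_, hc2⟩ <;> [exact e1 hc1; exact e2 hc2]
            · exfalso
              subst heq
              have e1 := ew1 (z - 1) (by omega)
              have e2 : extVal n k w (z - 1 + 1) ≠ 0 := by
                rw [show z - 1 + 1 = z by omega, ew2 z le_rfl]; exact hzs
              rcases hc with ⟨hc1, _⟩ | ⟨_, hc2⟩ <;> [exact e1 hc1; exact e2 hc2]
            · refine ⟨hjk, ?_⟩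
              rw [← ew2 j (by omega), ← ew2 (j + 1) (by omega)]
              exact hc
      have hnm : z - 1 ∉ altSet n k w := by
        rw [mem_altSet]
        have e1 := ew1 (z - 1) (by omega)
        have e2 : extVal n k w (z - 1 + 1) ≠ 0 := by
          rw [show z - 1 + 1 = z by omega, ew2 z le_rfl]; exact hzs
        rintro ⟨_, ⟨hc1, _⟩ | ⟨_, hc2⟩⟩ <;> [exact e1 hc1; exact e2 hc2]
      rw [altNum_eq, altNum_eq, hkey, Finset.card_insert_of_notMem hnm]
  · -- nonzero prefix: zero it out up to the first zero coordinate
    have hex : ∃ m, extVal n k y m = 0 := ⟨k, extVal_ge y le_rfl⟩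
    obtain ⟨r, hrs, hrmin, hrk⟩ :
        ∃ r, extVal n k y r = 0 ∧ (∀ m < r, extVal n k y m ≠ 0) ∧ r ≤ k :=
      ⟨Nat.find hex, Nat.find_spec hex, fun m hm => by
        intro hc
        have h2 : Nat.find hex ≤ m := Nat.find_le hc
        omega, Nat.find_le (extVal_ge y le_rfl)⟩
    have hr1 : 1 ≤ r := by
      rcases Nat.eq_zero_or_pos r with h | h
      · exfalso
        apply h0
        have := hrs; rw [h, extVal_lt y hk] at this; exact this
      · exact h
    refine ⟨fun i => if h : i.val < r then ⟨0, hpos i⟩ else y i, ⟨?_, ?_⟩, ?_⟩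
    · intro hc
      have := congrFun hc ⟨0, hk⟩
      simp only [dif_pos (show (0 : ℕ) < r by omega)] at this
      apply h0
      rw [← this]
    · -- adjacency: A2 at j = r-1, with w the zero side
      refine Or.inr (Or.inl ⟨⟨r - 1, by omega⟩, Or.inl ⟨?_, ?_⟩, ?_⟩)
      · intro i hi
        simp only [Fin.val_mk] at hi
        simp only [dif_pos (show i.val < r by omega)]
      · intro i hi
        simp only [Fin.val_mk] at hi
        have := hrmin i.val (by omega)
        rwa [extVal_lt y i.isLt] at this
      · intro i hi
        simp only [Fin.val_mk] at hi
        simp only [dif_neg (show ¬ i.val < r by omega)]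
    · set w : ∀ i : Fin k, Fin (n i) :=
        fun i => if h : i.val < r then ⟨0, hpos i⟩ else y i with hw
      have ew1 : ∀ m ≤ r, extVal n k w m = 0 := by
        intro m hm
        by_cases hmk : m < k
        · rw [extVal_lt w hmk]
          rcases lt_or_eq_of_le hm with hlt | heq
          · simp only [hw, dif_pos hlt]
          · simp only [hw, dif_neg (show ¬ m < r by omega)]
            subst heq
            rwa [extVal_lt y hmk] at hrs
        · exact extVal_ge w (not_lt.1 hmk)
      have ew2 : ∀ m, r ≤ m → extVal n k w m = extVal n k y m := by
        intro m hm
        by_cases hmk : m < k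
        · rw [extVal_lt w hmk, extVal_lt y hmk]
          simp only [hw, dif_neg (show ¬ m < r by omega)]
        · rw [extVal_ge w (not_lt.1 hmk), extVal_ge y (not_lt.1 hmk)]
      have hkey : altSet n k y = insert (r - 1) (altSet n k w) := by
        ext j
        rw [Finset.mem_insert, mem_altSet, mem_altSet]
        constructor
        · rintro ⟨hjk, hc⟩
          rcases lt_trichotomy j (r - 1) with hlt | heq | hgt
          · exfalso
            have e1 := hrmin j (by omega)
            have e2 := hrmin (j + 1) (by omega)
            rcases hc with ⟨hc1, _⟩ | ⟨_, hc2⟩ <;> [exact e1 hc1; exact e2 hc2]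
          · exact Or.inl heq
          · refine Or.inr ⟨hjk, ?_⟩
            rw [ew2 j (by omega), ew2 (j + 1) (by omega)]
            exact hc
        · rintro (rfl | ⟨hjk, hc⟩)
          · refine ⟨by omega, Or.inr ⟨?_, ?_⟩⟩
            · exact hrmin (r - 1) (by omega)
            · rw [show r - 1 + 1 = r by omega]; exact hrs
          · rcases lt_trichotomy j (r - 1) with hlt | heq | hgt
            · exfalso
              have e1 := ew1 j (by omega)
              have e2 := ew1 (j + 1) (by omega)
              rcases hc with ⟨_, hc2⟩ | ⟨hc1, _⟩ <;> [exact hc2 e2; exact hc1 e1]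
            · exfalso
              subst heq
              have e1 := ew1 (r - 1) (by omega)
              have e2 := ew1 (r - 1 + 1) (by omega)
              rcases hc with ⟨_, hc2⟩ | ⟨hc1, _⟩ <;> [exact hc2 e2; exact hc1 e1]
            · refine ⟨hjk, ?_⟩
              rw [← ew2 j (by omega), ← ew2 (j + 1) (by omega)]
              exact hc
      have hnm : r - 1 ∉ altSet n k w := by
        rw [mem_altSet]
        have e1 := ew1 (r - 1) (by omega)
        have e2 := ew1 (r - 1 + 1) (by omega)
        rintro ⟨_, ⟨_, hc2⟩ | ⟨hc1, _⟩⟩ <;> [exact hc2 e2; exact hc1 e1]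
      rw [altNum_eq, altNum_eq, hkey, Finset.card_insert_of_notMem hnm]

end HierRadius

namespace HierRadius

variable {n : ℕ → ℕ} {k : ℕ}

lemma allzero_of_altNum_eq_zero {y : ∀ i : Fin k, Fin (n i)} (h : altNum n k y = 0) :
    ∀ i, (y i).val = 0 := by
  have hset : altSet n k y = ∅ := Finset.card_eq_zero.mp h
  have key : ∀ d, extVal n k y (k - d) = 0 := by
    intro d
    induction d with
    | zero => exact extVal_ge y (by omega)
    | succ d ih =>
      by_cases hd : k ≤ d
      · rw [show k - (d + 1) = k - d by omega]; exact ih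
      · by_contra hc
        have hmem : k - (d + 1) ∈ altSet n k y := by
          rw [mem_altSet]
          refine ⟨by omega, Or.inr ⟨hc, ?_⟩⟩
          rw [show k - (d + 1) + 1 = k - d by omega]
          exact ih
        rw [hset] at hmem
        exact absurd hmem (Finset.notMem_empty _)
  intro i
  have h2 := key (k - i.val)
  rw [show k - (k - i.val) = i.val by have := i.isLt; omega, extVal_lt y i.isLt] at h2
  exact h2

lemma exists_walk (hn : ∀ i < k, 2 ≤ n i) (hpos : ∀ i : Fin k, 0 < n i) (hk : 0 < k)
    (a : ℕ) : ∀ y : ∀ i : Fin k, Fin (n i), altNum n k y ≤ a →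
      ∃ p : (hierGraph n k).Walk (fun i => ⟨0, hpos i⟩) y, p.length ≤ a := by
  induction a with
  | zero =>
    intro y hy
    have h0 := allzero_of_altNum_eq_zero (Nat.le_zero.mp hy)
    have he : (fun i : Fin k => (⟨0, hpos i⟩ : Fin (n i))) = y := by
      funext i
      exact Fin.ext (by simp [h0 i])
    subst he
    exact ⟨SimpleGraph.Walk.nil, by simp⟩
  | succ a ih =>
    intro y hy
    by_cases h : altNum n k y ≤ a
    · obtain ⟨p, hp⟩ := ih y h
      exact ⟨p, by omega⟩
    · obtain ⟨w, hadj, hcnt⟩ := exists_step hk hn y (by omega)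
      obtain ⟨p, hp⟩ := ih w (by omega)
      exact ⟨p.concat (show (hierGraph n k).Adj w y from hadj), by rw [SimpleGraph.Walk.length_concat]; omega⟩

lemma walk_abs_le {VV : Type*} {G : SimpleGraph VV} {f : VV → ℤ}
    (hf : ∀ u v : VV, G.Adj u v → |f u - f v| ≤ 1) {u v : VV} (p : G.Walk u v) :
    |f u - f v| ≤ p.length := by
  induction p with
  | nil => simp
  | @cons a b c h q ih =>
    rw [SimpleGraph.Walk.length_cons]
    have h1 := hf _ _ h
    have h3 := abs_sub_le (f a) (f b) (f c)
    push_cast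
    linarith

lemma fpot_adj (hk : k - 1 < k) {u v : ∀ i : Fin k, Fin (n i)} (h : HierAdj n k u v) :
    |(if (u ⟨k - 1, hk⟩).val = 0 then (altNum n k u : ℤ) else -(altNum n k u)) -
     (if (v ⟨k - 1, hk⟩).val = 0 then (altNum n k v : ℤ) else -(altNum n k v))| ≤ 1 := by
  have hsym : HierAdj n k v u := (hierGraph n k).adj_symm h
  have l1 := altNum_adj_le h
  have l2 := altNum_adj_le hsym
  by_cases hu : (u ⟨k - 1, hk⟩).val = 0 <;> by_cases hv : (v ⟨k - 1, hk⟩).val = 0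
  · rw [if_pos hu, if_pos hv, abs_sub_le_iff]
    constructor <;> omega
  · obtain ⟨hz, hnz⟩ := crossing hk h hu hv
    have e1 : altNum n k u = 0 := altNum_eq_zero hz
    have e2 : altNum n k v = 1 := altNum_allnonzero (by omega) hnz
    rw [if_pos hu, if_neg hv, e1, e2]
    norm_num
  · obtain ⟨hz, hnz⟩ := crossing hk hsym hv hu
    have e1 : altNum n k v = 0 := altNum_eq_zero hz
    have e2 : altNum n k u = 1 := altNum_allnonzero (by omega) hnz
    rw [if_neg hu, if_pos hv, e1, e2]
    norm_num
  · rw [if_neg hu, if_neg hv, abs_sub_le_iff]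
    constructor <;> omega

lemma far (hk : 0 < k) (hn : ∀ i < k, 2 ≤ n i) (hpos : ∀ i : Fin k, 0 < n i)
    (x : ∀ i : Fin k, Fin (n i)) : ∃ y, k ≤ (hierGraph n k).dist x y := by
  have hk' : k - 1 < k := by omega
  classical
  by_cases hx0 : (x ⟨k - 1, hk'⟩).val = 0
  · -- witness with nonzero top and altNum ≥ k
    set y : ∀ i : Fin k, Fin (n i) := fun i =>
      if (k - 1 - i.val) % 2 = 0 then ⟨1, by have := hn i.val i.isLt; omega⟩
      else ⟨0, hpos i⟩ with hy_def
    have ey : ∀ m, m < k → (extVal n k y m = 0 ↔ (k - 1 - m) % 2 = 1) := by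
      intro m hm
      rw [extVal_lt y hm]
      simp only [hy_def, Fin.val_mk]
      split <;> rename_i hcond <;> simp <;> omega
    have hytop : (y ⟨k - 1, hk'⟩).val ≠ 0 := by
      intro hc
      rw [← extVal_lt y hk'] at hc
      have := (ey (k - 1) hk').1 hc
      omega
    have hsub : Finset.range k ⊆ altSet n k y := by
      intro j hj
      rw [Finset.mem_range] at hj
      rw [mem_altSet]
      refine ⟨hj, ?_⟩
      by_cases hjk : j + 1 < k
      · have e1 := ey j hj
        have e2 := ey (j + 1) hjk
        by_cases hpar : (k - 1 - j) % 2 = 0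
        · exact Or.inr ⟨fun hc => by rw [e1] at hc; omega, by rw [e2]; omega⟩
        · exact Or.inl ⟨by rw [e1]; omega, fun hc => by rw [e2] at hc; omega⟩
      · have e1 := ey j hj
        refine Or.inr ⟨fun hc => ?_, extVal_ge y (by omega)⟩
        rw [e1] at hc
        omega
    have hAy : k ≤ altNum n k y := by
      rw [altNum_eq]
      calc k = (Finset.range k).card := by simp
        _ ≤ _ := Finset.card_le_card hsub
    refine ⟨y, ?_⟩
    have hreach : (hierGraph n k).Reachable x y := by
      obtain ⟨p1, _⟩ := exists_walk hn hpos hk (altNum n k x) x le_rfl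
      obtain ⟨p2, _⟩ := exists_walk hn hpos hk (altNum n k y) y le_rfl
      exact (p1.reachable).symm.trans p2.reachable
    obtain ⟨p, hp⟩ := hreach.exists_walk_length_eq_dist
    have hb := walk_abs_le (f := fun v =>
      if (v ⟨k - 1, hk'⟩).val = 0 then (altNum n k v : ℤ) else -(altNum n k v))
      (fun u v h => fpot_adj hk' h) p
    rw [hp] at hb
    simp only [if_pos hx0, if_neg hytop] at hb
    rw [sub_neg_eq_add, abs_of_nonneg (by positivity)] at hb
    have : (k : ℤ) ≤ (hierGraph n k).dist x y := by
      refine le_trans ?_ hb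
      omega
    exact_mod_cast this
  · -- witness with zero top and altNum ≥ k - 1
    set y : ∀ i : Fin k, Fin (n i) := fun i =>
      if (k - 1 - i.val) % 2 = 1 then ⟨1, by have := hn i.val i.isLt; omega⟩
      else ⟨0, hpos i⟩ with hy_def
    have ey : ∀ m, m < k → (extVal n k y m = 0 ↔ (k - 1 - m) % 2 = 0) := by
      intro m hm
      rw [extVal_lt y hm]
      simp only [hy_def, Fin.val_mk]
      split <;> rename_i hcond <;> simp <;> omega
    have hytop : (y ⟨k - 1, hk'⟩).val = 0 := by
      rw [← extVal_lt y hk', ey (k - 1) hk']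
      omega
    have hsub : Finset.range (k - 1) ⊆ altSet n k y := by
      intro j hj
      rw [Finset.mem_range] at hj
      rw [mem_altSet]
      refine ⟨by omega, ?_⟩
      have e1 := ey j (by omega)
      have e2 := ey (j + 1) (by omega)
      by_cases hpar : (k - 1 - j) % 2 = 0
      · exact Or.inl ⟨by rw [e1]; omega, fun hc => by rw [e2] at hc; omega⟩
      · exact Or.inr ⟨fun hc => by rw [e1] at hc; omega, by rw [e2]; omega⟩
    have hAy : k - 1 ≤ altNum n k y := by
      rw [altNum_eq]
      calc k - 1 = (Finset.range (k - 1)).card := by simp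
        _ ≤ _ := Finset.card_le_card hsub
    have hAx : 1 ≤ altNum n k x := by
      rw [altNum_eq]
      refine Finset.card_pos.mpr ⟨k - 1, ?_⟩
      rw [mem_altSet]
      refine ⟨by omega, Or.inr ⟨?_, extVal_ge x (by omega)⟩⟩
      rw [extVal_lt x hk']
      exact hx0
    refine ⟨y, ?_⟩
    have hreach : (hierGraph n k).Reachable x y := by
      obtain ⟨p1, _⟩ := exists_walk hn hpos hk (altNum n k x) x le_rfl
      obtain ⟨p2, _⟩ := exists_walk hn hpos hk (altNum n k y) y le_rfl
      exact (p1.reachable).symm.trans p2.reachable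
    obtain ⟨p, hp⟩ := hreach.exists_walk_length_eq_dist
    have hb := walk_abs_le (f := fun v =>
      if (v ⟨k - 1, hk'⟩).val = 0 then (altNum n k v : ℤ) else -(altNum n k v))
      (fun u v h => fpot_adj hk' h) p
    rw [hp] at hb
    simp only [if_neg hx0, if_pos hytop] at hb
    rw [show -((altNum n k x : ℤ)) - (altNum n k y : ℤ)
        = -((altNum n k x : ℤ) + (altNum n k y : ℤ)) by ring,
      abs_neg, abs_of_nonneg (by positivity)] at hb
    have : (k : ℤ) ≤ (hierGraph n k).dist x y := by
      refine le_trans ?_ hb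
      omega
    exact_mod_cast this

end HierRadius

/-- The radius of `H_{n_1,…,n_k}` (minimum over all vertices of their eccentricity)
equals `k`. -/
theorem stmt_13 (n : ℕ → ℕ) (k : ℕ) (hk : 1 ≤ k) (hn : ∀ i < k, 2 ≤ n i) :
    (⨅ x : ∀ i : Fin k, Fin (n i),
        Finset.univ.sup fun y : ∀ i : Fin k, Fin (n i) => (hierGraph n k).dist x y) =
      k := by
  have hpos : ∀ i : Fin k, 0 < n i := fun i => lt_of_lt_of_le two_pos (hn i.val i.isLt)
  haveI : Nonempty (∀ i : Fin k, Fin (n i)) := ⟨fun i => ⟨0, hpos i⟩⟩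
  apply le_antisymm
  · refine le_trans (ciInf_le (OrderBot.bddBelow _) (fun i => ⟨0, hpos i⟩)) ?_
    refine Finset.sup_le fun y _ => ?_
    obtain ⟨p, hp⟩ :=
      HierRadius.exists_walk hn hpos (by omega) k y (HierRadius.altNum_le y)
    exact le_trans (SimpleGraph.dist_le p) hp
  · refine le_ciInf fun x => ?_
    obtain ⟨y, hy⟩ := HierRadius.far (by omega) hn hpos x
    exact le_trans hy (Finset.le_sup (Finset.mem_univ y))
end

section
/- Let k ≥ 1 and consider the hierarchical graph H_{2,…,2} (k copies of 2), whose vertices are binary strings of length k, with root r = 00…0. For every i with 0 ≤ i ≤ k, the number of vertices at graph distance exactly i from r equals the binomial coefficient C(k,i). -/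
namespace S15

variable {k : ℕ}

abbrev V (k : ℕ) := ∀ i : Fin k, Fin ((fun _ : ℕ => 2) i)

def E (k : ℕ) (x : V k) (j : ℕ) : ℕ := extVal (fun _ => 2) k x j

lemma E_le (x : V k) (j : ℕ) : E k x j ≤ 1 := by
  unfold E extVal; split
  · exact Nat.lt_succ_iff.mp (x _).is_lt
  · exact Nat.zero_le 1

lemma E_apply (x : V k) {j : ℕ} (h : j < k) : E k x j = (x ⟨j, h⟩).val := by
  simp [E, extVal, h]

lemma E_ge (x : V k) {j : ℕ} (h : k ≤ j) : E k x j = 0 := by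
  simp [E, extVal, Nat.not_lt.mpr h]

def bset (k : ℕ) (x : V k) : Finset ℕ :=
  (Finset.range k).filter (fun j =>
    (extVal (fun _ => 2) k x j = 0 ∧ extVal (fun _ => 2) k x (j + 1) ≠ 0) ∨
    (extVal (fun _ => 2) k x j ≠ 0 ∧ extVal (fun _ => 2) k x (j + 1) = 0))

lemma altNum_eq (x : V k) : altNum (fun _ => 2) k x = (bset k x).card := rfl

lemma mem_bset {x : V k} {j : ℕ} :
    j ∈ bset k x ↔ j < k ∧ ((E k x j = 0 ∧ E k x (j+1) ≠ 0) ∨ (E k x j ≠ 0 ∧ E k x (j+1) = 0)) := by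
  simp only [bset, Finset.mem_filter, Finset.mem_range, E]

lemma adj_struct {x y : V k} (h : HierAdj (fun _ => 2) k x y) :
    ∃ m, 1 ≤ m ∧ m ≤ k ∧ (∀ j, j < m → E k x j ≠ E k y j) ∧
      (∀ j, m ≤ j → E k x j = E k y j) := by
  obtain ⟨hne, h⟩ := h
  rcases h with h | ⟨j, hj, hag⟩ | ⟨m, hm, hpre, hx, hy, hxy, hs⟩
  · -- A1
    have hk0 : 0 < k := by
      by_contra hk
      exact hne (funext fun i => absurd i.is_lt (by omega))
    refine ⟨1, le_refl 1, hk0, ?_, ?_⟩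
    · intro j hj
      interval_cases j
      have hne0 : x ⟨0, hk0⟩ ≠ y ⟨0, hk0⟩ := by
        intro heq
        apply hne
        funext i
        rcases Nat.eq_zero_or_pos i.val with h0 | h0
        · have : i = ⟨0, hk0⟩ := Fin.ext h0
          rw [this]; exact heq
        · exact h i h0
      rw [E_apply x hk0, E_apply y hk0]
      exact fun hv => hne0 (Fin.ext hv)
    · intro j hj
      rcases Nat.lt_or_ge j k with hjk | hjk
      · rw [E_apply x hjk, E_apply y hjk, h ⟨j, hjk⟩ hj]
      · rw [E_ge x hjk, E_ge y hjk]
  · -- A2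
    refine ⟨j.val + 1, by omega, by have := j.is_lt; omega, ?_, ?_⟩
    · intro jj hjj
      have hjjk : jj < k := by have := j.is_lt; omega
      rw [E_apply x hjjk, E_apply y hjjk]
      have hle : (⟨jj, hjjk⟩ : Fin k).val ≤ j.val := show jj ≤ j.val by omega
      rcases hj with ⟨h0, h1⟩ | ⟨h0, h1⟩
      · rw [h0 ⟨jj, hjjk⟩ hle]; exact fun hv => h1 ⟨jj, hjjk⟩ hle hv.symm
      · rw [h0 ⟨jj, hjjk⟩ hle]; exact h1 ⟨jj, hjjk⟩ hle
    · intro jj hjj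
      rcases Nat.lt_or_ge jj k with hjk | hjk
      · rw [E_apply x hjk, E_apply y hjk, hag ⟨jj, hjk⟩ (show j.val < jj by omega)]
      · rw [E_ge x hjk, E_ge y hjk]
  · -- A3 impossible for n = 2
    exfalso
    have h1 : (x m).val = 1 := by
      have h := Nat.lt_succ_iff.mp ((x m).is_lt : (x m).val < 2); omega
    have h2 : (y m).val = 1 := by
      have h := Nat.lt_succ_iff.mp ((y m).is_lt : (y m).val < 2); omega
    exact hxy (Fin.ext (h1.trans h2.symm))

lemma altNum_le_of_adj {x y : V k} (h : HierAdj (fun _ => 2) k x y) :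
    altNum (fun _ => 2) k y ≤ altNum (fun _ => 2) k x + 1 := by
  obtain ⟨m, hm1, hmk, hdiff, hagree⟩ := adj_struct h
  rw [altNum_eq, altNum_eq]
  have hsub : bset k y ⊆ insert (m - 1) (bset k x) := by
    intro j hj
    rw [Finset.mem_insert]
    rcases eq_or_ne j (m - 1) with rfl | hne
    · exact Or.inl rfl
    right
    rw [mem_bset] at hj ⊢
    obtain ⟨hjk, hcond⟩ := hj
    refine ⟨hjk, ?_⟩
    rcases Nat.lt_or_ge j (m - 1) with hlt | hge
    · have h1 := hdiff j (by omega)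
      have h2 := hdiff (j + 1) (by omega)
      have := E_le x j; have := E_le x (j+1); have := E_le y j; have := E_le y (j+1)
      omega
    · have hgm : m ≤ j := by omega
      rw [hagree j hgm, hagree (j + 1) (by omega)]
      exact hcond
  calc (bset k y).card ≤ (insert (m - 1) (bset k x)).card := Finset.card_le_card hsub
    _ ≤ (bset k x).card + 1 := Finset.card_insert_le _ _

lemma altNum_le_walk {x y : V k} (w : (hierGraph (fun _ => 2) k).Walk x y) :
    altNum (fun _ => 2) k y ≤ altNum (fun _ => 2) k x + w.length := by
  induction w with
  | nil => simp
  | cons h p ih =>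
    have h1 := altNum_le_of_adj h
    simp only [SimpleGraph.Walk.length_cons]
    omega

lemma altNum_zero_of_all_zero {x : V k} (hx : ∀ j, E k x j = 0) :
    altNum (fun _ => 2) k x = 0 := by
  rw [altNum_eq, Finset.card_eq_zero]
  rw [Finset.eq_empty_iff_forall_notMem]
  intro j hj
  rw [mem_bset] at hj
  have := hx j; have := hx (j + 1)
  omega

lemma all_zero_of_altNum_zero {x : V k} (hx : altNum (fun _ => 2) k x = 0) :
    ∀ j, E k x j = 0 := by
  rw [altNum_eq, Finset.card_eq_zero] at hx
  have key : ∀ d j, k - j ≤ d → E k x j = 0 := by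
    intro d
    induction d with
    | zero => intro j hj; exact E_ge x (by omega)
    | succ d ih =>
      intro j hj
      rcases Nat.lt_or_ge j k with hjk | hjk
      · have h1 : E k x (j + 1) = 0 := ih (j + 1) (by omega)
        by_contra hne
        have : j ∈ bset k x := mem_bset.mpr ⟨hjk, Or.inr ⟨hne, h1⟩⟩
        rw [hx] at this
        exact absurd this (Finset.notMem_empty j)
      · exact E_ge x hjk
  exact fun j => key (k - j) j le_rfl

lemma exists_walk (r : V k) (hr : ∀ i, (r i).val = 0) :
    ∀ d (x : V k), altNum (fun _ => 2) k x = d →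
      ∃ w : (hierGraph (fun _ => 2) k).Walk r x, w.length = d := by
  intro d
  induction d with
  | zero =>
    intro x hx
    have hxr : r = x := by
      funext i
      apply Fin.ext
      have h1 := all_zero_of_altNum_zero hx i.val
      rw [E_apply x i.is_lt, Fin.eta] at h1
      rw [hr i, h1]
    exact ⟨SimpleGraph.Walk.nil.copy rfl hxr, by simp⟩
  | succ d ih =>
    intro x hx
    have hble : E k x 0 ≤ 1 := E_le x 0
    have hex : ∃ j, E k x j ≠ E k x 0 := by
      rcases Nat.le_one_iff_eq_zero_or_eq_one.mp hble with hb0 | hb0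
      · by_contra hcon
        push_neg at hcon
        have : altNum (fun _ => 2) k x = 0 :=
          altNum_zero_of_all_zero (fun j => by rw [hcon j, hb0])
        omega
      · exact ⟨k, by rw [E_ge x le_rfl, hb0]; omega⟩
    set b := E k x 0 with hb
    let m := Nat.find hex
    have hmne : E k x m ≠ b := Nat.find_spec hex
    have hmin : ∀ j, j < m → E k x j = b := fun j hj => not_not.mp (Nat.find_min hex hj)
    have hm1 : 1 ≤ m := by
      by_contra hcon
      exact hmne (by rw [show m = 0 by omega])
    have hmk : m ≤ k := by
      by_contra hcon
      have h1 : E k x k = b := hmin k (by omega)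
      rw [E_ge x le_rfl] at h1
      have h2 : E k x m = 0 := E_ge x (by omega)
      omega
    have hEm : E k x m = 1 - b := by have := E_le x m; omega
    let c : Fin 2 := ⟨1 - b, by omega⟩
    let y : V k := fun i2 => if i2.val < m then c else x i2
    have hEy : ∀ j, E k y j = if j < m then 1 - b else E k x j := by
      intro j
      rcases Nat.lt_or_ge j k with hjk | hjk
      · by_cases hjm : j < m
        · rw [if_pos hjm, E_apply y hjk]
          show (if (⟨j, hjk⟩ : Fin k).val < m then c else x ⟨j, hjk⟩).val = 1 - b
          rw [if_pos hjm]
        · rw [if_neg hjm, E_apply y hjk, E_apply x hjk]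
          show (if (⟨j, hjk⟩ : Fin k).val < m then c else x ⟨j, hjk⟩).val = _
          rw [if_neg hjm]
      · rw [E_ge y hjk, E_ge x hjk, if_neg (by omega)]
    have hEyx : ∀ j, m ≤ j → E k y j = E k x j := fun j hj => by
      rw [hEy j, if_neg (by omega)]
    have hne : x ≠ y := by
      intro heq
      have h0 : E k x 0 = E k y 0 := by rw [heq]
      rw [hEy 0, if_pos (by omega)] at h0
      omega
    have hxv : ∀ i : Fin k, i.val ≤ m - 1 → (x i).val = b := by
      intro i hi
      have h1 := hmin i.val (by omega)
      rwa [E_apply x i.is_lt, Fin.eta] at h1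
    have hyv : ∀ i : Fin k, i.val ≤ m - 1 → (y i).val = 1 - b := by
      intro i hi
      show (if i.val < m then c else x i).val = 1 - b
      rw [if_pos (by omega)]
    have hadj : HierAdj (fun _ => 2) k x y := by
      refine ⟨hne, Or.inr (Or.inl ⟨⟨m - 1, by omega⟩, ?_, ?_⟩)⟩
      · rcases Nat.le_one_iff_eq_zero_or_eq_one.mp hble with hb0 | hb0
        · exact Or.inl ⟨fun i hi => by rw [hxv i hi]; omega,
            fun i hi => by rw [hyv i hi]; omega⟩
        · exact Or.inr ⟨fun i hi => by rw [hyv i hi]; omega,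
            fun i hi => by rw [hxv i hi]; omega⟩
      · intro i hi
        have hi' : m - 1 < i.val := hi
        show x i = if i.val < m then c else x i
        rw [if_neg (by omega)]
    have hsets : bset k x = insert (m - 1) (bset k y) := by
      ext j
      rw [Finset.mem_insert, mem_bset, mem_bset]
      rcases lt_trichotomy j (m - 1) with hlt | heq | hgt
      · have h1 : E k x j = b := hmin j (by omega)
        have h2 : E k x (j + 1) = b := hmin (j + 1) (by omega)
        have h3 : E k y j = 1 - b := by rw [hEy j, if_pos (by omega)]
        have h4 : E k y (j + 1) = 1 - b := by rw [hEy (j + 1), if_pos (by omega)]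
        omega
      · subst heq
        rw [show m - 1 + 1 = m from by omega]
        have h1 : E k x (m - 1) = b := hmin _ (by omega)
        have h3 : E k y (m - 1) = 1 - b := by rw [hEy, if_pos (by omega)]
        have h4 : E k y m = 1 - b := by rw [hEyx m le_rfl, hEm]
        omega
      · have h1 := hEyx j (by omega)
        have h2 := hEyx (j + 1) (by omega)
        omega
    have hnotmem : m - 1 ∉ bset k y := by
      rw [mem_bset, show m - 1 + 1 = m from by omega]
      have h3 : E k y (m - 1) = 1 - b := by rw [hEy, if_pos (by omega)]
      have h4 : E k y m = 1 - b := by rw [hEyx m le_rfl, hEm]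
      omega
    have hAy : altNum (fun _ => 2) k y = d := by
      have hcard : altNum (fun _ => 2) k x = altNum (fun _ => 2) k y + 1 := by
        rw [altNum_eq, altNum_eq, hsets, Finset.card_insert_of_notMem hnotmem]
      omega
    obtain ⟨w, hw⟩ := ih y hAy
    refine ⟨w.concat ((hierGraph (fun _ => 2) k).adj_symm hadj), ?_⟩
    rw [SimpleGraph.Walk.length_concat, hw]

lemma altNum_root (r : V k) (hr : ∀ i, (r i).val = 0) : altNum (fun _ => 2) k r = 0 := by
  apply altNum_zero_of_all_zero
  intro j
  rcases Nat.lt_or_ge j k with hjk | hjk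
  · rw [E_apply r hjk, hr]
  · exact E_ge r hjk

lemma dist_eq (r : V k) (hr : ∀ i, (r i).val = 0) (x : V k) :
    (hierGraph (fun _ => 2) k).dist r x = altNum (fun _ => 2) k x := by
  obtain ⟨w, hw⟩ := exists_walk r hr (altNum (fun _ => 2) k x) x rfl
  have hub : (hierGraph (fun _ => 2) k).dist r x ≤ altNum (fun _ => 2) k x :=
    hw ▸ SimpleGraph.dist_le w
  obtain ⟨w0, hw0⟩ := w.reachable.exists_walk_length_eq_dist
  have hlb := altNum_le_walk w0
  have hr0 := altNum_root r hr
  omega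

def Phi (k : ℕ) (x : V k) : Finset (Fin k) :=
  Finset.univ.filter (fun j : Fin k => E k x j.val ≠ E k x (j.val + 1))

lemma card_Phi (x : V k) : (Phi k x).card = altNum (fun _ => 2) k x := by
  rw [altNum_eq]
  apply Finset.card_bij (fun (a : Fin k) _ => a.val)
  · intro a ha
    rw [mem_bset]
    simp only [Phi, Finset.mem_filter, Finset.mem_univ, true_and] at ha
    refine ⟨a.is_lt, ?_⟩
    have h1 := E_le x a.val
    have h2 := E_le x (a.val + 1)
    omega
  · intro a _ b _ h
    exact Fin.ext h
  · intro jn hjn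
    rw [mem_bset] at hjn
    refine ⟨⟨jn, hjn.1⟩, ?_, rfl⟩
    simp only [Phi, Finset.mem_filter, Finset.mem_univ, true_and]
    show E k x jn ≠ E k x (jn + 1)
    have := hjn.2
    omega
lemma Phi_inj : Function.Injective (Phi k) := by
  intro x y hxy
  have key : ∀ d j, k - j ≤ d → E k x j = E k y j := by
    intro d
    induction d with
    | zero => intro j hj; rw [E_ge x (by omega), E_ge y (by omega)]
    | succ d ih =>
      intro j hj
      rcases Nat.lt_or_ge j k with hjk | hjk
      · have h1 := ih (j + 1) (by omega)
        have hmem := Finset.ext_iff.mp hxy ⟨j, hjk⟩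
        simp only [Phi, Finset.mem_filter, Finset.mem_univ, true_and] at hmem
        have hmem' : (E k x j ≠ E k x (j + 1)) ↔ (E k y j ≠ E k y (j + 1)) := hmem
        have hx1 := E_le x j
        have hx2 := E_le x (j + 1)
        have hy1 := E_le y j
        have hy2 := E_le y (j + 1)
        omega
      · rw [E_ge x hjk, E_ge y hjk]
  funext i
  apply Fin.ext
  have h := key k i.val (by omega)
  rwa [E_apply x i.is_lt, E_apply y i.is_lt] at h

lemma Phi_surj : Function.Surjective (Phi k) := by
  have hcard : Fintype.card (V k) = Fintype.card (Finset (Fin k)) := by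
    simp [Fintype.card_finset, Fintype.card_pi]
  exact ((Fintype.bijective_iff_injective_and_card (Phi k)).mpr ⟨Phi_inj, hcard⟩).2

end S15

/-- In the binomial tree `H_{2,…,2}` (k copies of 2), the number of vertices at distance
exactly `i` from the root equals the binomial coefficient `C(k,i)`. -/
theorem stmt_15 (k : ℕ) (hk : 1 ≤ k) (r : ∀ i : Fin k, Fin 2) (hr : ∀ i, (r i).val = 0)
    (i : ℕ) (hi : i ≤ k) :
    {x : ∀ j : Fin k, Fin 2 | (hierGraph (fun _ => 2) k).dist r x = i}.ncard =
      Nat.choose k i := by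
  classical
  have hdist := S15.dist_eq r hr
  have hset : {x : ∀ j : Fin k, Fin 2 | (hierGraph (fun _ => 2) k).dist r x = i}
      = {x : S15.V k | altNum (fun _ => 2) k x = i} := by
    ext x
    simp only [Set.mem_setOf_eq, hdist x]
  rw [hset, Set.ncard_eq_toFinset_card', Set.toFinset_setOf]
  have hpow : ((Finset.univ : Finset (Fin k)).powersetCard i).card = k.choose i := by
    simp [Finset.card_powersetCard]
  rw [← hpow]
  apply Finset.card_bij (fun x _ => S15.Phi k x)
  · intro a ha
    rw [Finset.mem_powersetCard]
    refine ⟨Finset.subset_univ _, ?_⟩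
    rw [S15.card_Phi]
    simpa using ha
  · intro a _ b _ h
    exact S15.Phi_inj h
  · intro S hS
    obtain ⟨x, hx⟩ := S15.Phi_surj S
    refine ⟨x, ?_, hx⟩
    simp only [Finset.mem_filter, Finset.mem_univ, true_and]
    rw [← S15.card_Phi, hx]
    exact (Finset.mem_powersetCard.mp hS).2
end

section
/- Let k ≥ 1 and consider the hierarchical graph H_{2,…,2} (k copies of 2), whose vertices are binary strings of length k. The map x ↦ x̄, which sends each binary string to the string obtained by interchanging 0's and 1's (coordinatewise complement), is a graph automorphism of H_{2,…,2}. -/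
lemma compl_compl2 (a : Fin 2) : 1 - (1 - a) = a := by revert a; decide

lemma compl_zero_iff (a : Fin 2) : ((1 : Fin 2) - a).val = 0 ↔ a.val ≠ 0 := by revert a; decide

lemma compl_adj (k : ℕ) (x y : ∀ _ : Fin k, Fin 2)
    (h : HierAdj (fun _ => 2) k x y) :
    HierAdj (fun _ => 2) k (fun i => 1 - x i) (fun i => 1 - y i) := by
  obtain ⟨hne, h⟩ := h
  refine ⟨fun hc => hne (funext fun i => ?_), ?_⟩
  · have := congrFun hc i
    have h2 := congrArg (fun a => 1 - a) this
    rwa [compl_compl2, compl_compl2] at h2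
  rcases h with h | ⟨j, hj, hag⟩ | ⟨m, hm, hpre, hx, hy, hxy, hs⟩
  · exact Or.inl fun i hi => show 1 - x i = 1 - y i by rw [h i hi]
  · refine Or.inr (Or.inl ⟨j, ?_, fun i hi => show 1 - x i = 1 - y i by rw [hag i hi]⟩)
    rcases hj with ⟨h0, h1⟩ | ⟨h0, h1⟩
    · refine Or.inr ⟨fun i hi => (compl_zero_iff (y i)).mpr (h1 i hi),
        fun i hi hc => (compl_zero_iff (x i)).mp hc (h0 i hi)⟩
    · refine Or.inl ⟨fun i hi => (compl_zero_iff (x i)).mpr (h1 i hi),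
        fun i hi hc => (compl_zero_iff (y i)).mp hc (h0 i hi)⟩
  · exact absurd (Fin.ext (by omega : (x m).val = (y m).val)) hxy

/-- The coordinatewise complement map `x ↦ x̄` (interchanging 0's and 1's) is a graph
automorphism of the binomial tree `H_{2,…,2}`. -/
theorem stmt_17 (k : ℕ) (hk : 1 ≤ k) :
    ∃ e : hierGraph (fun _ => 2) k ≃g hierGraph (fun _ => 2) k,
      ∀ (x : ∀ i : Fin k, Fin 2) (i : Fin k), e x i = 1 - x i := by
  refine ⟨⟨⟨fun x i => 1 - x i, fun x i => 1 - x i,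
    fun x => funext fun i => compl_compl2 (x i),
    fun x => funext fun i => compl_compl2 (x i)⟩, ?_⟩, fun x i => rfl⟩
  intro x y
  constructor
  · intro h
    have := compl_adj k _ _ h
    simp [compl_compl2] at this
    exact this
  · exact fun h => compl_adj k x y h
end

section
/- Let k ≥ 2, let n_1,…,n_k be integers with each n_i ≥ 2, and let 1 ≤ i ≤ k−1. Fix a string α = α_{k−i+1}…α_k with α_j ∈ Z_{n_j}, and let x = x'α and y = y'α be two vertices of the hierarchical graph H_{n_1,…,n_k} whose last i coordinates equal α. Then the graph distance between x and y in H_{n_1,…,n_k} equals the graph distance between x' and y' in the hierarchical graph H_{n_1,…,n_{k−i}} (i.e., the induced subgraph on vertices ending in α is isometrically embedded). -/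


lemma walk_pull {V W : Type*} {G : SimpleGraph V} {H : SimpleGraph W} (f : V → W)
    (hf : ∀ ⦃u v⦄, G.Adj u v → f u = f v ∨ H.Adj (f u) (f v)) :
    ∀ {u v : V} (p : G.Walk u v), ∃ q : H.Walk (f u) (f v), q.length ≤ p.length := by
  intro u v p
  induction p with
  | nil => exact ⟨.nil, le_refl 0⟩
  | cons h p ih =>
      obtain ⟨q, hq⟩ := ih
      rcases hf h with he | ha
      · exact ⟨q.copy he.symm rfl, by simpa using Nat.le_succ_of_le hq⟩
      · exact ⟨.cons ha q, Nat.succ_le_succ hq⟩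

/-- Extension by a fixed suffix is a homomorphism. -/
lemma ext_adj (n : ℕ → ℕ) (k m : ℕ) (hmk : m ≤ k)
    (α : ∀ j : Fin k, m ≤ j.val → Fin (n j))
    (u v : ∀ j : Fin m, Fin (n j))
    (h : HierAdj n m u v) :
    HierAdj n k (fun j => if hj : j.val < m then u ⟨j.val, hj⟩ else α j (le_of_not_gt hj))
               (fun j => if hj : j.val < m then v ⟨j.val, hj⟩ else α j (le_of_not_gt hj)) := by
  obtain ⟨hne, hcase⟩ := h
  constructor
  · intro he
    apply hne
    funext j
    have := congrFun he ⟨j.val, lt_of_lt_of_le j.isLt hmk⟩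
    simpa [j.isLt] using this
  · rcases hcase with h1 | ⟨j, hj, hag⟩ | ⟨p, hp, hpre, hxp, hyp, hxyp, hs⟩
    · left
      intro i hi
      by_cases hlt : i.val < m
      · simpa [hlt] using h1 ⟨i.val, hlt⟩ hi
      · simp [hlt]
    · right; left
      refine ⟨⟨j.val, lt_of_lt_of_le j.isLt hmk⟩, ?_, ?_⟩
      · rcases hj with ⟨ha, hb⟩ | ⟨ha, hb⟩
        · left
          constructor <;> intro i hi <;>
            · have hlt : i.val < m := lt_of_le_of_lt hi j.isLt
              simp only [hlt, dif_pos]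
              first
                | exact ha ⟨i.val, hlt⟩ hi
                | exact hb ⟨i.val, hlt⟩ hi
        · right
          constructor <;> intro i hi <;>
            · have hlt : i.val < m := lt_of_le_of_lt hi j.isLt
              simp only [hlt, dif_pos]
              first
                | exact ha ⟨i.val, hlt⟩ hi
                | exact hb ⟨i.val, hlt⟩ hi
      · intro i hi
        by_cases hlt : i.val < m
        · simpa [hlt] using hag ⟨i.val, hlt⟩ hi
        · simp [hlt]
    · right; right
      refine ⟨⟨p.val, lt_of_lt_of_le p.isLt hmk⟩, hp, ?_, ?_, ?_, ?_, ?_⟩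
      · intro i hi
        have hlt : i.val < m := lt_trans hi p.isLt
        simpa [hlt] using hpre ⟨i.val, hlt⟩ hi
      · simpa [p.isLt] using hxp
      · simpa [p.isLt] using hyp
      · simpa [p.isLt] using hxyp
      · intro i hi
        by_cases hlt : i.val < m
        · simpa [hlt] using hs ⟨i.val, hlt⟩ hi
        · simp [hlt]

/-- Restriction maps edges to edges or to equal vertices. -/
lemma restr_adj (n : ℕ → ℕ) (k m : ℕ) (hm : 1 ≤ m) (hmk : m ≤ k)
    (u v : ∀ j : Fin k, Fin (n j))
    (h : HierAdj n k u v) :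
    (fun j : Fin m => u ⟨j.val, lt_of_lt_of_le j.isLt hmk⟩) =
      (fun j : Fin m => v ⟨j.val, lt_of_lt_of_le j.isLt hmk⟩) ∨
    HierAdj n m (fun j : Fin m => u ⟨j.val, lt_of_lt_of_le j.isLt hmk⟩)
      (fun j : Fin m => v ⟨j.val, lt_of_lt_of_le j.isLt hmk⟩) := by
  obtain ⟨hne, hcase⟩ := h
  have h0k : (0 : ℕ) < k := lt_of_lt_of_le hm hmk
  rcases hcase with h1 | ⟨j, hj, hag⟩ | ⟨p, hp, hpre, hxp, hyp, hxyp, hs⟩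
  · -- A1
    have hne0 : u ⟨0, h0k⟩ ≠ v ⟨0, h0k⟩ := by
      intro he
      apply hne
      funext i
      rcases Nat.eq_zero_or_pos i.val with h0 | h0
      · have : i = ⟨0, h0k⟩ := Fin.ext h0
        rw [this]; exact he
      · exact h1 i h0
    right
    refine ⟨?_, Or.inl ?_⟩
    · intro he
      exact hne0 (congrFun he ⟨0, hm⟩)
    · intro i hi
      exact h1 ⟨i.val, lt_of_lt_of_le i.isLt hmk⟩ hi
  · -- A2
    have hne0 : u ⟨0, h0k⟩ ≠ v ⟨0, h0k⟩ := by
      rcases hj with ⟨ha, hb⟩ | ⟨ha, hb⟩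
      · intro he
        exact hb ⟨0, h0k⟩ (Nat.zero_le _) (he ▸ ha ⟨0, h0k⟩ (Nat.zero_le _))
      · intro he
        exact hb ⟨0, h0k⟩ (Nat.zero_le _) (he.symm ▸ ha ⟨0, h0k⟩ (Nat.zero_le _))
    right
    refine ⟨fun he => hne0 (congrFun he ⟨0, hm⟩), Or.inr (Or.inl ?_)⟩
    by_cases hjm : j.val < m
    · refine ⟨⟨j.val, hjm⟩, ?_, ?_⟩
      · rcases hj with ⟨ha, hb⟩ | ⟨ha, hb⟩
        · exact Or.inl ⟨fun i hi => ha _ hi, fun i hi => hb _ hi⟩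
        · exact Or.inr ⟨fun i hi => ha _ hi, fun i hi => hb _ hi⟩
      · intro i hi
        exact hag ⟨i.val, lt_of_lt_of_le i.isLt hmk⟩ hi
    · refine ⟨⟨m - 1, Nat.sub_lt hm Nat.one_pos⟩, ?_, ?_⟩
      · have hle : ∀ i : Fin m, i.val ≤ j.val := fun i =>
          le_of_lt (lt_of_lt_of_le i.isLt (le_of_not_gt hjm))
        rcases hj with ⟨ha, hb⟩ | ⟨ha, hb⟩
        · exact Or.inl ⟨fun i _ => ha _ (hle i), fun i _ => hb _ (hle i)⟩
        · exact Or.inr ⟨fun i _ => ha _ (hle i), fun i _ => hb _ (hle i)⟩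
      · intro i hi
        exact absurd (Nat.le_sub_one_of_lt i.isLt) (not_le_of_gt hi)
  · -- A3
    by_cases hpm : p.val < m
    · right
      refine ⟨?_, Or.inr (Or.inr ⟨⟨p.val, hpm⟩, hp, ?_, hxp, hyp, hxyp, ?_⟩)⟩
      · intro he
        exact hxyp (congrFun he ⟨p.val, hpm⟩)
      · intro i hi
        exact hpre ⟨i.val, lt_of_lt_of_le i.isLt hmk⟩ hi
      · intro i hi
        exact hs ⟨i.val, lt_of_lt_of_le i.isLt hmk⟩ hi
    · left
      funext i
      have hip : i.val < p.val := lt_of_lt_of_le i.isLt (le_of_not_gt hpm)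
      have := hpre ⟨i.val, lt_of_lt_of_le i.isLt hmk⟩ hip
      exact Fin.ext (this.1.trans this.2.symm)


def extHom (n : ℕ → ℕ) (k m : ℕ) (hmk : m ≤ k)
    (α : ∀ j : Fin k, m ≤ j.val → Fin (n j)) : hierGraph n m →g hierGraph n k :=
  ⟨fun z j => if hj : j.val < m then z ⟨j.val, hj⟩ else α j (le_of_not_gt hj),
   fun {u v} h => ext_adj n k m hmk α u v h⟩

lemma key_dist_eq (n : ℕ → ℕ) (k m : ℕ) (hm1 : 1 ≤ m) (hmk : m ≤ k)
    (α : ∀ j : Fin k, m ≤ j.val → Fin (n j))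
    (x y : ∀ j : Fin k, Fin (n j))
    (hx : ∀ (j : Fin k) (h : m ≤ j.val), x j = α j h)
    (hy : ∀ (j : Fin k) (h : m ≤ j.val), y j = α j h)
    (x' y' : ∀ j : Fin m, Fin (n j))
    (hx' : ∀ (j : Fin k) (h : j.val < m), x j = x' ⟨j.val, h⟩)
    (hy' : ∀ (j : Fin k) (h : j.val < m), y j = y' ⟨j.val, h⟩) :
    (hierGraph n k).dist x y = (hierGraph n m).dist x' y' := by
  have hfx : (extHom n k m hmk α) x' = x := by
    funext j
    have hco : (extHom n k m hmk α) x' j =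
        if hj : j.val < m then x' ⟨j.val, hj⟩ else α j (le_of_not_gt hj) := rfl
    rw [hco]
    by_cases hj : j.val < m
    · rw [dif_pos hj]
      exact (hx' j hj).symm
    · rw [dif_neg hj]
      exact (hx j (le_of_not_gt hj)).symm
  have hfy : (extHom n k m hmk α) y' = y := by
    funext j
    have hco : (extHom n k m hmk α) y' j =
        if hj : j.val < m then y' ⟨j.val, hj⟩ else α j (le_of_not_gt hj) := rfl
    rw [hco]
    by_cases hj : j.val < m
    · rw [dif_pos hj]
      exact (hy' j hj).symm
    · rw [dif_neg hj]
      exact (hy j (le_of_not_gt hj)).symm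
  have hRx : (fun j : Fin m => x ⟨j.val, lt_of_lt_of_le j.isLt hmk⟩) = x' := by
    funext j
    simpa using hx' ⟨j.val, lt_of_lt_of_le j.isLt hmk⟩ j.isLt
  have hRy : (fun j : Fin m => y ⟨j.val, lt_of_lt_of_le j.isLt hmk⟩) = y' := by
    funext j
    simpa using hy' ⟨j.val, lt_of_lt_of_le j.isLt hmk⟩ j.isLt
  have pull : ∀ {u v : ∀ j : Fin k, Fin (n j)} (p : (hierGraph n k).Walk u v),
      ∃ q : (hierGraph n m).Walk
        (fun j : Fin m => u ⟨j.val, lt_of_lt_of_le j.isLt hmk⟩)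
        (fun j : Fin m => v ⟨j.val, lt_of_lt_of_le j.isLt hmk⟩), q.length ≤ p.length :=
    fun {u v} p => walk_pull (fun w (j : Fin m) => w ⟨j.val, lt_of_lt_of_le j.isLt hmk⟩)
      (fun u v h => restr_adj n k m hm1 hmk u v h) p
  by_cases hr : (hierGraph n k).Reachable x y
  · obtain ⟨p, hp⟩ := hr.exists_walk_length_eq_dist
    obtain ⟨q, hq⟩ := pull p
    have h1 : (hierGraph n m).dist x' y' ≤ (hierGraph n k).dist x y := by
      calc (hierGraph n m).dist x' y' ≤ (q.copy hRx hRy).length :=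
            SimpleGraph.dist_le _
        _ = q.length := SimpleGraph.Walk.length_copy _ _ _
        _ ≤ p.length := hq
        _ = (hierGraph n k).dist x y := hp
    have hr' : (hierGraph n m).Reachable x' y' := ⟨q.copy hRx hRy⟩
    obtain ⟨q', hq'⟩ := hr'.exists_walk_length_eq_dist
    have h2 : (hierGraph n k).dist x y ≤ (hierGraph n m).dist x' y' := by
      calc (hierGraph n k).dist x y
          ≤ ((q'.map (extHom n k m hmk α)).copy hfx hfy).length :=
            SimpleGraph.dist_le _
        _ = q'.length := by
            rw [SimpleGraph.Walk.length_copy, SimpleGraph.Walk.length_map]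
        _ = (hierGraph n m).dist x' y' := hq'
    exact le_antisymm h2 h1
  · have hr' : ¬ (hierGraph n m).Reachable x' y' := by
      rintro ⟨q⟩
      exact hr ⟨(q.map (extHom n k m hmk α)).copy hfx hfy⟩
    rw [SimpleGraph.dist_eq_zero_of_not_reachable hr,
      SimpleGraph.dist_eq_zero_of_not_reachable hr']

/-- For a fixed suffix `α` of length `i` (with `1 ≤ i ≤ k-1`), if `x = x'α` and `y = y'α`
are vertices of `H_{n_1,…,n_k}` ending in `α`, then the distance between `x` and `y` in
`H_{n_1,…,n_k}` equals the distance between `x'` and `y'` in `H_{n_1,…,n_{k-i}}`. -/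
theorem stmt_19 (n : ℕ → ℕ) (k i : ℕ) (hk : 2 ≤ k) (hn : ∀ j < k, 2 ≤ n j)
    (hi1 : 1 ≤ i) (hik : i ≤ k - 1)
    (α : ∀ j : Fin k, k - i ≤ j.val → Fin (n j))
    (x y : ∀ j : Fin k, Fin (n j))
    (hx : ∀ (j : Fin k) (h : k - i ≤ j.val), x j = α j h)
    (hy : ∀ (j : Fin k) (h : k - i ≤ j.val), y j = α j h)
    (x' y' : ∀ j : Fin (k - i), Fin (n j))
    (hx' : ∀ (j : Fin k) (h : j.val < k - i), x j = x' ⟨j.val, h⟩)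
    (hy' : ∀ (j : Fin k) (h : j.val < k - i), y j = y' ⟨j.val, h⟩) :
    (hierGraph n k).dist x y = (hierGraph n (k - i)).dist x' y' := by
  have hm1 : 1 ≤ k - i := by omega
  exact key_dist_eq n k (k - i) hm1 (Nat.sub_le k i) α x y hx hy x' y' hx' hy'
end
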